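/- Let ζ ∈ (0,1) and let (α_k)_{k∈ℕ} be positive reals with α_k = Θ((k+1)^{−1}). Define the window indices s_0 := 0 and s_{t+1} := the least k > s_t such that Σ_{i=s_t}^{k} α_i > α_{s_t}^{ζ}. Then the window lengths satisfy s_{t+1} − s_t = Θ((s_t + 1)^{1−ζ}); that is, there exist positive constants C₁ ≤ C₂ such that for all sufficiently large t, C₁(s_t+1)^{1−ζ} ≤ s_{t+1} − s_t ≤ C₂(s_t+1)^{1−ζ}. -/

import Mathlib

set_option maxHeartbeats 1000000


/-- For step sizes `α_k = Θ(1/(k+1))` and the window indices `s_t`,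
the window lengths satisfy `s_{t+1} - s_t = Θ((s_t + 1)^{1-ζ})`. -/
theorem window_length_growth (ζ : ℝ) (hζ : ζ ∈ Set.Ioo (0 : ℝ) 1)
    (α : ℕ → ℝ) (hαpos : ∀ k, 0 < α k)
    (hΘ : ∃ c₁ c₂ : ℝ, ∃ N : ℕ, 0 < c₁ ∧ c₁ ≤ c₂ ∧ ∀ k ≥ N,
      c₁ / ((k : ℝ) + 1) ≤ α k ∧ α k ≤ c₂ / ((k : ℝ) + 1))
    (s : ℕ → ℕ) (hs0 : s 0 = 0)
    (hs : ∀ t, IsLeast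
      {k : ℕ | s t < k ∧ (α (s t)) ^ ζ < ∑ i ∈ Finset.Icc (s t) k, α i} (s (t + 1))) :
    ∃ C₁ C₂ : ℝ, 0 < C₁ ∧ C₁ ≤ C₂ ∧ ∃ T : ℕ, ∀ t ≥ T,
      C₁ * ((s t : ℝ) + 1) ^ (1 - ζ) ≤ (s (t + 1) : ℝ) - (s t : ℝ) ∧
      (s (t + 1) : ℝ) - (s t : ℝ) ≤ C₂ * ((s t : ℝ) + 1) ^ (1 - ζ) := by
  obtain ⟨c₁, c₂, N, hc₁, hc₁₂, hαb⟩ := hΘ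
  have hζ0 : (0:ℝ) < ζ := hζ.1
  have hζ1 : ζ < 1 := hζ.2
  have hc₂ : 0 < c₂ := lt_of_lt_of_le hc₁ hc₁₂
  have hkey : ∀ t, s t < s (t + 1) := fun t => (hs t).1.1
  have hsge : ∀ t, t ≤ s t := by
    intro t
    induction t with
    | zero => exact Nat.zero_le _
    | succ n ih => have := hkey n; omega
  set C₁ : ℝ := c₁ ^ ζ / (2 * c₂) with hC₁def
  set C₂ : ℝ := max C₁ (2 * c₂ ^ ζ / c₁) with hC₂def
  have hc₁ζ : (0:ℝ) < c₁ ^ ζ := Real.rpow_pos_of_pos hc₁ ζ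
  have hc₂ζ : (0:ℝ) < c₂ ^ ζ := Real.rpow_pos_of_pos hc₂ ζ
  have hC₁pos : 0 < C₁ := by positivity
  have hC₁C₂ : C₁ ≤ C₂ := le_max_left _ _
  have hC₂ge : 2 * c₂ ^ ζ / c₁ ≤ C₂ := le_max_right _ _
  clear_value C₁ C₂
  refine ⟨C₁, C₂, hC₁pos, hC₁C₂, ?_⟩
  set M : ℝ := max (max (N : ℝ) c₂)
      (max ((2 * c₂ ^ ζ / c₁ + 1) ^ (1/ζ)) ((2 * c₂ / c₁ ^ ζ) ^ (1/(1-ζ)))) with hMdef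
  have hM1 : (N:ℝ) ≤ M := le_trans (le_max_left _ _) (le_max_left _ _)
  have hM2 : c₂ ≤ M := le_trans (le_max_right _ _) (le_max_left _ _)
  have hM3 : (2 * c₂ ^ ζ / c₁ + 1) ^ (1/ζ) ≤ M := le_trans (le_max_left _ _) (le_max_right _ _)
  have hM4 : (2 * c₂ / c₁ ^ ζ) ^ (1/(1-ζ)) ≤ M := le_trans (le_max_right _ _) (le_max_right _ _)
  clear_value M
  refine ⟨⌈M⌉₊, ?_⟩
  intro t ht
  set a := s t with ha
  set b := s (t + 1) with hb
  have hab : a < b := hkey t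
  have hmem : α a ^ ζ < ∑ i ∈ Finset.Icc a b, α i := (hs t).1.2
  have hmin : ∀ k, a < k → α a ^ ζ < ∑ i ∈ Finset.Icc a k, α i → b ≤ k :=
    fun k hk hk2 => (hs t).2 (Set.mem_setOf.mpr ⟨hk, hk2⟩)
  have hta : t ≤ a := hsge t
  clear_value a b
  have hMa : M ≤ (a : ℝ) := by
    have h1 : M ≤ (⌈M⌉₊ : ℝ) := Nat.le_ceil M
    have h2 : (⌈M⌉₊ : ℝ) ≤ (a : ℝ) := by
      exact_mod_cast le_trans ht hta
    linarith
  have hNa : N ≤ a := by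
    have : (N : ℝ) ≤ (a : ℝ) := le_trans hM1 hMa
    exact_mod_cast this
  have hc₂a : c₂ ≤ (a : ℝ) + 1 := by
    have : c₂ ≤ (a : ℝ) := le_trans hM2 hMa
    linarith
  have hapos : (0:ℝ) < (a : ℝ) + 1 := by positivity
  -- condition (iii): ((a:ℝ)+1)^ζ ≥ 2*c₂^ζ/c₁ + 1
  have hiii : 2 * c₂ ^ ζ / c₁ + 1 ≤ ((a : ℝ) + 1) ^ ζ := by
    have hx : (0:ℝ) ≤ 2 * c₂ ^ ζ / c₁ + 1 := by positivity
    have h1 : (2 * c₂ ^ ζ / c₁ + 1) ^ (1/ζ) ≤ (a : ℝ) + 1 := by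
      have := le_trans hM3 hMa
      linarith
    calc 2 * c₂ ^ ζ / c₁ + 1 = ((2 * c₂ ^ ζ / c₁ + 1) ^ (1/ζ)) ^ ζ := by
          rw [← Real.rpow_mul hx, one_div, inv_mul_cancel₀ (ne_of_gt hζ0), Real.rpow_one]
      _ ≤ ((a : ℝ) + 1) ^ ζ := Real.rpow_le_rpow (by positivity) h1 hζ0.le
  -- condition (iv): ((a:ℝ)+1)^(1-ζ) ≥ 2*c₂/c₁^ζ
  have hiv : 2 * c₂ / c₁ ^ ζ ≤ ((a : ℝ) + 1) ^ (1 - ζ) := by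
    have hx : (0:ℝ) ≤ 2 * c₂ / c₁ ^ ζ := by positivity
    have h1 : (2 * c₂ / c₁ ^ ζ) ^ (1/(1-ζ)) ≤ (a : ℝ) + 1 := by
      have := le_trans hM4 hMa
      linarith
    calc 2 * c₂ / c₁ ^ ζ = ((2 * c₂ / c₁ ^ ζ) ^ (1/(1-ζ))) ^ (1-ζ) := by
          rw [← Real.rpow_mul hx, one_div, inv_mul_cancel₀ (by linarith), Real.rpow_one]
      _ ≤ ((a : ℝ) + 1) ^ (1 - ζ) := Real.rpow_le_rpow (by positivity) h1 (by linarith)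
  set P : ℝ := ((a : ℝ) + 1) ^ ζ with hPdef
  set Q : ℝ := ((a : ℝ) + 1) ^ (1 - ζ) with hQdef
  have hPpos : 0 < P := Real.rpow_pos_of_pos hapos ζ
  have hQpos : 0 < Q := Real.rpow_pos_of_pos hapos (1 - ζ)
  have hPQ : P * Q = (a : ℝ) + 1 := by
    rw [hPdef, hQdef, ← Real.rpow_add hapos]
    norm_num
  have hP_eq : P = ((a : ℝ) + 1) ^ ζ := hPdef
  have hQ_eq : Q = ((a : ℝ) + 1) ^ (1 - ζ) := hQdef
  clear_value P Q
  -- sum bounds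
  have sum_ub : ∀ k, a ≤ k → ∑ i ∈ Finset.Icc a k, α i ≤ ((k:ℝ) - a + 1) * (c₂ / ((a:ℝ)+1)) := by
    intro k hk
    have h1 : ∑ i ∈ Finset.Icc a k, α i ≤ (Finset.Icc a k).card • (c₂ / ((a:ℝ)+1)) := by
      apply Finset.sum_le_card_nsmul
      intro i hi
      rw [Finset.mem_Icc] at hi
      have hiN : N ≤ i := le_trans hNa hi.1
      refine le_trans (hαb i hiN).2 ?_
      apply div_le_div_of_nonneg_left hc₂.le hapos
      have : (a:ℝ) ≤ (i:ℝ) := by exact_mod_cast hi.1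
      linarith
    rw [Nat.card_Icc, nsmul_eq_mul] at h1
    have hcast : ((k + 1 - a : ℕ) : ℝ) = (k:ℝ) - a + 1 := by
      have : a ≤ k + 1 := by omega
      push_cast [Nat.cast_sub this]
      ring
    rwa [hcast] at h1
  have sum_lb : ∀ k, a ≤ k → ((k:ℝ) - a + 1) * (c₁ / ((k:ℝ)+1)) ≤ ∑ i ∈ Finset.Icc a k, α i := by
    intro k hk
    have h1 : (Finset.Icc a k).card • (c₁ / ((k:ℝ)+1)) ≤ ∑ i ∈ Finset.Icc a k, α i := by
      apply Finset.card_nsmul_le_sum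
      intro i hi
      rw [Finset.mem_Icc] at hi
      have hiN : N ≤ i := le_trans hNa hi.1
      refine le_trans ?_ (hαb i hiN).1
      apply div_le_div_of_nonneg_left hc₁.le (by positivity)
      have : (i:ℝ) ≤ (k:ℝ) := by exact_mod_cast hi.2
      linarith
    rw [Nat.card_Icc, nsmul_eq_mul] at h1
    have hcast : ((k + 1 - a : ℕ) : ℝ) = (k:ℝ) - a + 1 := by
      have : a ≤ k + 1 := by omega
      push_cast [Nat.cast_sub this]
      ring
    rwa [hcast] at h1
  -- the key two inequalities from the least-element property
  have hstep : ∑ i ∈ Finset.Icc a (b - 1), α i ≤ α a ^ ζ := by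
    rcases eq_or_lt_of_le (Nat.succ_le_of_lt hab) with h | h
    · -- b = a + 1
      have hb1 : b - 1 = a := by omega
      rw [hb1, Finset.Icc_self, Finset.sum_singleton]
      have hα1 : α a ≤ 1 := by
        refine le_trans (hαb a hNa).2 ?_
        rw [div_le_one hapos]; exact hc₂a
      calc α a = α a ^ (1:ℝ) := (Real.rpow_one _).symm
        _ ≤ α a ^ ζ := Real.rpow_le_rpow_of_exponent_ge (hαpos a) hα1 hζ1.le
    · -- a + 1 < b, so a < b - 1 < b
      by_contra hcon
      push_neg at hcon
      have hle := hmin (b - 1) (by omega) hcon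
      omega
  -- combine: lower bound for the sum up to b-1
  have h1 : ((b:ℝ) - a) * (c₁ / (b:ℝ)) ≤ α a ^ ζ := by
    have := le_trans (sum_lb (b - 1) (by omega)) hstep
    have hcast : ((b - 1 : ℕ) : ℝ) = (b:ℝ) - 1 := by
      have : 1 ≤ b := by omega
      push_cast [Nat.cast_sub this]; ring
    rw [hcast] at this
    have e1 : (b:ℝ) - 1 - a + 1 = (b:ℝ) - a := by ring
    have e2 : (b:ℝ) - 1 + 1 = (b:ℝ) := by ring
    rwa [e1, e2] at this
  have hαaub : α a ^ ζ ≤ c₂ ^ ζ / P := by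
    calc α a ^ ζ ≤ (c₂ / ((a:ℝ)+1)) ^ ζ :=
          Real.rpow_le_rpow (hαpos a).le (hαb a hNa).2 hζ0.le
      _ = c₂ ^ ζ / P := by rw [hP_eq]; exact Real.div_rpow hc₂.le hapos.le ζ
  have hbpos : (0:ℝ) < (b:ℝ) := by
    have : 0 < b := by omega
    exact_mod_cast this
  have hab' : (a:ℝ) < (b:ℝ) := by exact_mod_cast hab
  -- b ≤ 2(a+1)
  have hb2 : (b:ℝ) ≤ 2 * ((a:ℝ) + 1) := by
    by_contra hcon
    push_neg at hcon
    have hba : (b:ℝ)/2 < (b:ℝ) - a := by linarith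
    have h2 : c₂ ^ ζ / P < c₁ / 2 := by
      rw [div_lt_div_iff₀ hPpos (by norm_num)]
      have e : 2 * c₂ ^ ζ / c₁ * c₁ = 2 * c₂ ^ ζ := div_mul_cancel₀ _ (ne_of_gt hc₁)
      have h' := mul_le_mul_of_nonneg_right hiii hc₁.le
      nlinarith [h', e]
    have h3 : c₁ / 2 < ((b:ℝ) - a) * (c₁ / (b:ℝ)) := by
      rw [mul_div_assoc', div_lt_div_iff₀ (by norm_num) hbpos]
      nlinarith [mul_lt_mul_of_pos_left hba hc₁]
    linarith
  -- upper bound on window length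
  have hub : (b:ℝ) - a ≤ (2 * c₂ ^ ζ / c₁) * Q := by
    have h4 : ((b:ℝ) - a) * c₁ * P ≤ c₂ ^ ζ * (b:ℝ) := by
      have := h1.trans hαaub
      rw [mul_div_assoc', div_le_div_iff₀ hbpos hPpos] at this
      linarith
    have h5 : ((b:ℝ) - a) * c₁ * P ≤ c₂ ^ ζ * (2 * (P * Q)) := by
      rw [hPQ]
      have h' := mul_le_mul_of_nonneg_left hb2 hc₂ζ.le
      linarith
    have h6 : ((b:ℝ) - a) * c₁ ≤ c₂ ^ ζ * (2 * Q) := by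
      have h5' : (((b:ℝ) - a) * c₁) * P ≤ (c₂ ^ ζ * (2 * Q)) * P := by linarith [h5]
      exact le_of_mul_le_mul_right h5' hPpos
    rw [div_mul_eq_mul_div, le_div_iff₀ hc₁]
    linarith [h6]
  -- lower bound on window length
  have hαalb : c₁ ^ ζ / P ≤ α a ^ ζ := by
    calc c₁ ^ ζ / P = (c₁ / ((a:ℝ)+1)) ^ ζ := by
          rw [hP_eq]; exact (Real.div_rpow hc₁.le hapos.le ζ).symm
      _ ≤ α a ^ ζ := Real.rpow_le_rpow (by positivity) (hαb a hNa).1 hζ0.le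
  have h7 : c₁ ^ ζ / P ≤ ((b:ℝ) - a + 1) * (c₂ / ((a:ℝ)+1)) :=
    le_trans hαalb (le_of_lt (lt_of_lt_of_le hmem (sum_ub b hab.le)))
  have h8 : c₁ ^ ζ * Q ≤ ((b:ℝ) - a + 1) * c₂ := by
    rw [mul_div_assoc', div_le_div_iff₀ hPpos hapos] at h7
    rw [← hPQ] at h7
    have h7' : (c₁ ^ ζ * Q) * P ≤ (((b:ℝ) - a + 1) * c₂) * P := by linarith [h7]
    exact le_of_mul_le_mul_right h7' hPpos
  have hlb : C₁ * Q ≤ (b:ℝ) - a := by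
    have h9 : (1:ℝ) ≤ C₁ * Q := by
      have e : c₁ ^ ζ * (2 * c₂ / c₁ ^ ζ) = 2 * c₂ := by field_simp
      have h := mul_le_mul_of_nonneg_left hiv hc₁ζ.le
      rw [e] at h
      rw [hC₁def, div_mul_eq_mul_div, le_div_iff₀ (by positivity)]
      linarith
    have h10 : c₁ ^ ζ * Q / c₂ ≤ (b:ℝ) - a + 1 := by
      rw [div_le_iff₀ hc₂]
      linarith [h8]
    have h11 : C₁ * Q + C₁ * Q = c₁ ^ ζ * Q / c₂ := by
      rw [hC₁def]; field_simp; ring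
    linarith
  refine ⟨hlb, le_trans hub ?_⟩
  exact mul_le_mul_of_nonneg_right hC₂ge hQpos.le
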